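/- The functionals J_p^G converge to I_{K_∞^G} in the sense of Mosco in L²(V,ν_G) as p → ∞, where J_p^G(u) = (1/(2p)) ∑_{x,y} |u(y)-u(x)|^p w_{xy} on L²∩L^p (+∞ otherwise), and I_{K_∞^G} is the indicator function of K_∞^G = { u ∈ L²(V,ν_G) : |u(y)-u(x)| ≤ 1 if x ∼ y }. -/

import Mathlib

open Filter ENNReal
set_option maxHeartbeats 1000000

/-- Pair summability of `(g x + g y) * w x y` with value `2 * ∑ g d`. -/
lemma mosco_pair_sum {V : Type*} [Countable V] (w : V → V → ℝ) (d : V → ℝ)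
    (hw : ∀ x y, 0 ≤ w x y) (hsymm : ∀ x y, w x y = w y x)
    (hws : ∀ x, Summable (w x)) (hd : ∀ x, d x = ∑' y, w x y)
    (g : V → ℝ) (hg : ∀ x, 0 ≤ g x) (hsum : Summable fun x => g x * d x) :
    Summable (fun q : V × V => (g q.1 + g q.2) * w q.1 q.2) ∧
      ∑' q : V × V, (g q.1 + g q.2) * w q.1 q.2 = 2 * ∑' x, g x * d x := by
  have hrowsum : ∀ x : V, ∑' y, g x * w x y = g x * d x := fun x => by
    rw [tsum_mul_left, ← hd x]
  have hf : (0:(V × V) → ℝ) ≤ fun q : V × V => g q.1 * w q.1 q.2 :=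
    fun q => mul_nonneg (hg _) (hw _ _)
  have h1 : Summable (fun q : V × V => g q.1 * w q.1 q.2) :=
    (summable_prod_of_nonneg hf).mpr
      ⟨fun x => (hws x).mul_left (g x), hsum.congr fun x => (hrowsum x).symm⟩
  have h1t : ∑' q : V × V, g q.1 * w q.1 q.2 = ∑' x, g x * d x := by
    rw [Summable.tsum_prod h1]; simp only [hrowsum]
  have hcomp : ∀ q : V × V, g q.2 * w q.1 q.2
      = (fun q : V × V => g q.1 * w q.1 q.2) ((Equiv.prodComm V V) q) := by
    intro q; simp [Equiv.prodComm, hsymm q.1 q.2]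
  have h2 : Summable (fun q : V × V => g q.2 * w q.1 q.2) := by
    have := ((Equiv.prodComm V V).summable_iff
      (f := fun q : V × V => g q.1 * w q.1 q.2)).mpr h1
    exact this.congr fun q => (hcomp q).symm
  have h2t : ∑' q : V × V, g q.2 * w q.1 q.2 = ∑' x, g x * d x := by
    calc ∑' q : V × V, g q.2 * w q.1 q.2
        = ∑' q : V × V, (fun q : V × V => g q.1 * w q.1 q.2) ((Equiv.prodComm V V) q) := by
          exact tsum_congr hcomp
      _ = ∑' q : V × V, g q.1 * w q.1 q.2 :=
          (Equiv.prodComm V V).tsum_eq (fun q : V × V => g q.1 * w q.1 q.2)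
      _ = _ := h1t
  constructor
  · exact (h1.add h2).congr fun q => by ring
  · calc ∑' q : V × V, (g q.1 + g q.2) * w q.1 q.2
        = ∑' q : V × V, (g q.1 * w q.1 q.2 + g q.2 * w q.1 q.2) := tsum_congr fun q => by ring
      _ = (∑' q : V × V, g q.1 * w q.1 q.2) + ∑' q : V × V, g q.2 * w q.1 q.2 :=
          Summable.tsum_add h1 h2
      _ = 2 * ∑' x, g x * d x := by rw [h1t, h2t]; ring

lemma mosco_rpow_sq (a M p : ℝ) (hM : |a| ≤ M) (hp : 2 ≤ p) :
    |a| ^ p ≤ M ^ (p - 2) * a ^ 2 := by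
  rcases eq_or_lt_of_le (abs_nonneg a) with h0 | h0
  · have ha : a = 0 := abs_eq_zero.mp h0.symm
    rw [← h0, Real.zero_rpow (by linarith), ha]
    have hM0 : (0:ℝ) ≤ M := le_trans (abs_nonneg a) hM
    positivity
  · have key : |a| ^ (p - 2) * |a| ^ (2:ℝ) = |a| ^ p := by
      rw [← Real.rpow_add h0]; norm_num
    rw [← key, Real.rpow_two, sq_abs]
    exact mul_le_mul_of_nonneg_right
      (Real.rpow_le_rpow (abs_nonneg a) hM (by linarith)) (sq_nonneg a)

lemma mosco_rpow_bound (p a b : ℝ) (hp : 0 ≤ p) :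
    |b - a| ^ p ≤ 2 ^ p * (|a| ^ p + |b| ^ p) := by
  have h0 : |b - a| ≤ 2 * max |a| |b| := by
    have h := abs_sub b a
    have h1 := le_max_left |a| |b|
    have h2 := le_max_right |a| |b|
    linarith
  have h2 : |b - a| ^ p ≤ (2 * max |a| |b|) ^ p :=
    Real.rpow_le_rpow (abs_nonneg _) h0 hp
  have h3 : (2 * max |a| |b|) ^ p = 2 ^ p * (max |a| |b|) ^ p :=
    Real.mul_rpow (by norm_num) (le_max_of_le_left (abs_nonneg _))
  have h4 : (max |a| |b|) ^ p ≤ |a| ^ p + |b| ^ p := by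
    rcases max_cases |a| |b| with ⟨h, _⟩ | ⟨h, _⟩ <;> rw [h]
    · exact le_add_of_nonneg_right (Real.rpow_nonneg (abs_nonneg _) _)
    · exact le_add_of_nonneg_left (Real.rpow_nonneg (abs_nonneg _) _)
  have h5 : (0:ℝ) ≤ 2 ^ p := Real.rpow_nonneg (by norm_num) _
  exact h2.trans (by rw [h3]; exact mul_le_mul_of_nonneg_left h4 h5)

lemma mosco_grow (s c2 : ℝ) (hs : 1 < s) (hc2 : 0 < c2) (pn : ℕ → ℝ)
    (hpn : ∀ n, 3 ≤ pn n) (htop : Tendsto pn atTop atTop) :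
    Tendsto (fun n => (1 / (2 * pn n)) * (s ^ (pn n) * c2)) atTop atTop := by
  have hc : 0 < Real.log s := Real.log_pos hs
  have h1 : Tendsto (fun t : ℝ => Real.exp t / t) atTop atTop := by
    simpa using Real.tendsto_exp_div_pow_atTop 1
  have h2 : Tendsto (fun n => Real.log s * pn n) atTop atTop :=
    Tendsto.const_mul_atTop hc htop
  have h3 : Tendsto
      (fun n => Real.exp (Real.log s * pn n) / (Real.log s * pn n)) atTop atTop :=
    h1.comp h2
  have h4 : Tendsto (fun n =>
      (Real.exp (Real.log s * pn n) / (Real.log s * pn n)) * (Real.log s * c2 / 2))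
      atTop atTop := h3.atTop_mul_const (by positivity)
  refine h4.congr fun n => ?_
  have hp : (0:ℝ) < pn n := lt_of_lt_of_le (by norm_num) (hpn n)
  have hrw : s ^ (pn n) = Real.exp (Real.log s * pn n) :=
    Real.rpow_def_of_pos (by linarith) _
  rw [hrw]
  field_simp

/-- Mosco convergence of J_p^G to the indicator function of K_∞^G in L²(V,ν_G). -/
theorem stmt9 {V : Type*} [Countable V] (w : V → V → ℝ) (d : V → ℝ)
    (hw : ∀ x y, 0 ≤ w x y) (hsymm : ∀ x y, w x y = w y x)
    (hd : ∀ x, d x = ∑' y, w x y) (hdpos : ∀ x, 0 < d x)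
    (J : ℝ → (V → ℝ) → ℝ≥0∞)
    (hJ : ∀ (p : ℝ) (u : V → ℝ),
      (((Summable fun x => (u x) ^ 2 * d x) ∧ (Summable fun x => |u x| ^ p * d x)) →
        J p u =
          ENNReal.ofReal ((1 / (2 * p)) * ∑' q : V × V, |u q.2 - u q.1| ^ p * w q.1 q.2)) ∧
      (¬((Summable fun x => (u x) ^ 2 * d x) ∧ (Summable fun x => |u x| ^ p * d x)) →
        J p u = ⊤))
    (IK : (V → ℝ) → ℝ≥0∞)
    (hIK : ∀ u : V → ℝ,
      (((Summable fun x => (u x) ^ 2 * d x) ∧ (∀ x y, w x y ≠ 0 → |u y - u x| ≤ 1)) →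
        IK u = 0) ∧
      (¬((Summable fun x => (u x) ^ 2 * d x) ∧ (∀ x y, w x y ≠ 0 → |u y - u x| ≤ 1)) →
        IK u = ⊤)) :
    ∀ pn : ℕ → ℝ, (∀ n, 3 ≤ pn n) → Tendsto pn atTop atTop →
      -- (i) recovery sequences
      ((∀ u : V → ℝ, IK u ≠ ⊤ →
          ∃ un : ℕ → V → ℝ, (∀ n, Summable fun x => (un n x) ^ 2 * d x) ∧
            Tendsto (fun n => ∑' x, (un n x - u x) ^ 2 * d x) atTop (nhds 0) ∧
            Filter.limsup (fun n => J (pn n) (un n)) atTop ≤ IK u) ∧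
      -- (ii) weak lower semicontinuity
        (∀ (u : V → ℝ) (un : ℕ → V → ℝ),
          (Summable fun x => (u x) ^ 2 * d x) →
          (∀ n, Summable fun x => (un n x) ^ 2 * d x) →
          (∀ φ : V → ℝ, (Summable fun x => (φ x) ^ 2 * d x) →
            Tendsto (fun n => ∑' x, un n x * φ x * d x) atTop
              (nhds (∑' x, u x * φ x * d x))) →
          IK u ≤ Filter.liminf (fun n => J (pn n) (un n)) atTop)) := by
  intro pn hpn3 hpnTop
  have hws : ∀ x, Summable (w x) := by
    intro x
    by_contra h
    exact (hdpos x).ne' (by rw [hd x, tsum_eq_zero_of_not_summable h])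
  constructor
  · -- Part (i): recovery sequences
    intro u hIKu
    have hmem : (Summable fun x => (u x) ^ 2 * d x) ∧
        ∀ x y, w x y ≠ 0 → |u y - u x| ≤ 1 := by
      by_contra h
      exact hIKu ((hIK u).2 h)
    obtain ⟨hu2, hedge⟩ := hmem
    have hIK0 : IK u = 0 := (hIK u).1 ⟨hu2, hedge⟩
    set A := ∑' x, (u x) ^ 2 * d x with hA
    -- truncation sequence
    set tr : ℕ → V → ℝ := fun n x => max (-(n : ℝ)) (min (u x) (n : ℝ)) with htr
    have habs : ∀ n x, |tr n x| ≤ |u x| := by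
      intro n x
      have hn0 : (0:ℝ) ≤ (n:ℝ) := Nat.cast_nonneg n
      rw [abs_le]
      constructor
      · exact le_max_of_le_right (le_min (neg_abs_le _) (by linarith [abs_nonneg (u x)]))
      · exact max_le (by linarith [abs_nonneg (u x)])
          ((min_le_left _ _).trans (le_abs_self _))
    have hbdd : ∀ n x, |tr n x| ≤ (n : ℝ) := by
      intro n x
      have hn0 : (0:ℝ) ≤ (n:ℝ) := Nat.cast_nonneg n
      rw [abs_le]
      exact ⟨le_max_left _ _, max_le (by linarith) (min_le_right _ _)⟩
    have hsq : ∀ n x, (tr n x) ^ 2 * d x ≤ (u x) ^ 2 * d x := by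
      intro n x
      have := habs n x
      have h2 : (tr n x) ^ 2 ≤ (u x) ^ 2 := by
        rw [← sq_abs (tr n x), ← sq_abs (u x)]
        exact pow_le_pow_left₀ (abs_nonneg _) this 2
      exact mul_le_mul_of_nonneg_right h2 (hdpos x).le
    have hlip : ∀ n x y, |tr n y - tr n x| ≤ |u y - u x| := by
      intro n x y
      calc |tr n y - tr n x|
          ≤ |(-(n:ℝ)) - (-(n:ℝ))| ⊔ |min (u y) (n:ℝ) - min (u x) (n:ℝ)| :=
            abs_max_sub_max_le_max _ _ _ _
        _ ≤ |u y - u x| := by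
            apply max_le
            · simp [abs_nonneg]
            · calc |min (u y) (n:ℝ) - min (u x) (n:ℝ)|
                  ≤ |u y - u x| ⊔ |(n:ℝ) - (n:ℝ)| := abs_min_sub_min_le_max _ _ _ _
                _ ≤ |u y - u x| := by apply max_le le_rfl; simp [abs_nonneg]
    have hv2 : ∀ n, Summable fun x => (tr n x) ^ 2 * d x := fun n =>
      hu2.of_nonneg_of_le (fun x => mul_nonneg (sq_nonneg _) (hdpos x).le) (hsq n)
    refine ⟨tr, hv2, ?_, ?_⟩
    · -- L² convergence via dominated convergence
      have hdom := tendsto_tsum_of_dominated_convergence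
        (f := fun n x => (tr n x - u x) ^ 2 * d x) (g := fun _ => (0:ℝ))
        (bound := fun x => 4 * ((u x) ^ 2 * d x)) (𝓕 := atTop)
        (hu2.mul_left 4)
        (by
          intro x
          obtain ⟨N, hN⟩ := exists_nat_ge |u x|
          have hev : (fun n => (tr n x - u x) ^ 2 * d x) =ᶠ[atTop] (fun _ => (0:ℝ)) := by
            filter_upwards [eventually_ge_atTop N] with n hn
            have h1 : |u x| ≤ (n : ℝ) := hN.trans (Nat.cast_le.mpr hn)
            obtain ⟨h2, h3⟩ := abs_le.mp h1
            have : tr n x = u x := by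
              rw [htr]; simp only []
              rw [min_eq_left h3, max_eq_right h2]
            simp [this]
          exact Tendsto.congr' hev.symm tendsto_const_nhds)
        (by
          apply Eventually.of_forall
          intro n x
          have h1 : |tr n x - u x| ≤ 2 * |u x| := by
            have := abs_sub (tr n x) (u x)
            have := habs n x
            linarith
          have h2 : (tr n x - u x) ^ 2 ≤ 4 * (u x) ^ 2 := by
            have h3 : (tr n x - u x) ^ 2 ≤ (2 * |u x|) ^ 2 := by
              rw [← sq_abs (tr n x - u x)]
              exact pow_le_pow_left₀ (abs_nonneg _) h1 2
            have : (2 * |u x|) ^ 2 = 4 * (u x) ^ 2 := by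
              rw [mul_pow, sq_abs]; norm_num
            linarith
          rw [Real.norm_eq_abs, abs_of_nonneg (mul_nonneg (sq_nonneg _) (hdpos x).le)]
          calc (tr n x - u x) ^ 2 * d x ≤ 4 * (u x) ^ 2 * d x :=
                mul_le_mul_of_nonneg_right h2 (hdpos x).le
            _ = 4 * ((u x) ^ 2 * d x) := by ring)
      simpa using hdom
    · -- limsup bound
      have hA0 : 0 ≤ A := tsum_nonneg fun x => mul_nonneg (sq_nonneg _) (hdpos x).le
      have hkey : ∀ n, J (pn n) (tr n) ≤ ENNReal.ofReal (1 / (2 * pn n) * (4 * A)) := by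
        intro n
        set p := pn n with hp
        have hp3 : 3 ≤ p := hpn3 n
        have hp0 : 0 < p := by linarith
        -- summability of |tr|^p d
        have hvp : Summable fun x => |tr n x| ^ p * d x := by
          refine Summable.of_nonneg_of_le
            (fun x => mul_nonneg (Real.rpow_nonneg (abs_nonneg _) _) (hdpos x).le)
            (fun x => ?_) (((hv2 n).mul_left ((n:ℝ) ^ (p - 2))))
          calc |tr n x| ^ p * d x ≤ ((n:ℝ) ^ (p - 2) * (tr n x) ^ 2) * d x :=
                mul_le_mul_of_nonneg_right
                  (mosco_rpow_sq _ _ _ (hbdd n x) (by linarith)) (hdpos x).le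
            _ = (n:ℝ) ^ (p - 2) * ((tr n x) ^ 2 * d x) := by ring
        rw [(hJ p (tr n)).1 ⟨hv2 n, hvp⟩]
        -- bound the double sum
        have hpair := mosco_pair_sum w d hw hsymm hws hd (fun x => (tr n x) ^ 2)
          (fun x => sq_nonneg _) (hv2 n)
        have hterm : ∀ q : V × V, |tr n q.2 - tr n q.1| ^ p * w q.1 q.2 ≤
            2 * (((tr n q.1) ^ 2 + (tr n q.2) ^ 2) * w q.1 q.2) := by
          intro q
          by_cases hwq : w q.1 q.2 = 0
          · rw [hwq]; simp
          · have hle1 : |tr n q.2 - tr n q.1| ≤ 1 :=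
              (hlip n q.1 q.2).trans (hedge q.1 q.2 hwq)
            have h1 : |tr n q.2 - tr n q.1| ^ p ≤ (tr n q.2 - tr n q.1) ^ 2 := by
              have := mosco_rpow_sq (tr n q.2 - tr n q.1) 1 p hle1 (by linarith)
              rwa [Real.one_rpow, one_mul] at this
            have h2 : (tr n q.2 - tr n q.1) ^ 2 ≤
                2 * ((tr n q.1) ^ 2 + (tr n q.2) ^ 2) := by nlinarith [sq_nonneg (tr n q.1 + tr n q.2)]
            calc |tr n q.2 - tr n q.1| ^ p * w q.1 q.2
                ≤ (2 * ((tr n q.1) ^ 2 + (tr n q.2) ^ 2)) * w q.1 q.2 :=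
                  mul_le_mul_of_nonneg_right (h1.trans h2) (hw _ _)
              _ = 2 * (((tr n q.1) ^ 2 + (tr n q.2) ^ 2) * w q.1 q.2) := by ring
        have hFnonneg : ∀ q : V × V, 0 ≤ |tr n q.2 - tr n q.1| ^ p * w q.1 q.2 :=
          fun q => mul_nonneg (Real.rpow_nonneg (abs_nonneg _) _) (hw _ _)
        have hFs : Summable fun q : V × V => |tr n q.2 - tr n q.1| ^ p * w q.1 q.2 :=
          Summable.of_nonneg_of_le hFnonneg hterm (hpair.1.mul_left 2)
        have htsum : ∑' q : V × V, |tr n q.2 - tr n q.1| ^ p * w q.1 q.2 ≤ 4 * A := by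
          calc ∑' q : V × V, |tr n q.2 - tr n q.1| ^ p * w q.1 q.2
              ≤ ∑' q : V × V, 2 * (((tr n q.1) ^ 2 + (tr n q.2) ^ 2) * w q.1 q.2) :=
                Summable.tsum_le_tsum hterm hFs (hpair.1.mul_left 2)
            _ = 2 * ∑' q : V × V, ((tr n q.1) ^ 2 + (tr n q.2) ^ 2) * w q.1 q.2 :=
                tsum_mul_left
            _ = 2 * (2 * ∑' x, (tr n x) ^ 2 * d x) := by rw [hpair.2]
            _ ≤ 4 * A := by
                have := Summable.tsum_le_tsum (hsq n) (hv2 n) hu2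
                rw [hA]; linarith
        apply ENNReal.ofReal_le_ofReal
        have h2p : (0:ℝ) ≤ 1 / (2 * p) := by positivity
        exact mul_le_mul_of_nonneg_left htsum h2p
      have hb : Tendsto (fun n => ENNReal.ofReal (1 / (2 * pn n) * (4 * A)))
          atTop (nhds 0) := by
        have h2p : Tendsto (fun n => 2 * pn n) atTop atTop :=
          Tendsto.const_mul_atTop two_pos hpnTop
        have hinv : Tendsto (fun n => (2 * pn n)⁻¹) atTop (nhds 0) :=
          h2p.inv_tendsto_atTop
        have hr : Tendsto (fun n => 1 / (2 * pn n) * (4 * A)) atTop (nhds 0) := by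
          have := hinv.mul_const (4 * A)
          simpa [one_div] using this
        have := ENNReal.tendsto_ofReal (f := atTop) hr
        simpa using this
      calc Filter.limsup (fun n => J (pn n) (tr n)) atTop
          ≤ Filter.limsup (fun n => ENNReal.ofReal (1 / (2 * pn n) * (4 * A))) atTop :=
            Filter.limsup_le_limsup (Eventually.of_forall hkey)
        _ = 0 := hb.limsup_eq
        _ = IK u := hIK0.symm
  · -- Part (ii): weak lower semicontinuity
    intro u un hu2 hun2 hweak
    by_cases hcond : ∀ x y, w x y ≠ 0 → |u y - u x| ≤ 1
    · rw [(hIK u).1 ⟨hu2, hcond⟩]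
      exact zero_le
    · have hIKtop : IK u = ⊤ := (hIK u).2 (by tauto)
      push_neg at hcond
      obtain ⟨x, y, hwxy, hgt⟩ := hcond
      have hwpos : 0 < w x y := lt_of_le_of_ne (hw x y) (Ne.symm hwxy)
      -- pointwise convergence
      classical
      have hpt : ∀ z, Tendsto (fun n => un n z) atTop (nhds (u z)) := by
        intro z
        set φ : V → ℝ := fun t => if t = z then (d z)⁻¹ else 0 with hφdef
        have hφ : Summable fun t => (φ t) ^ 2 * d t := by
          apply summable_of_ne_finset_zero (s := {z})
          intro t ht
          simp only [Finset.mem_singleton] at ht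
          simp [hφdef, ht]
        have he : ∀ v : V → ℝ, ∑' t, v t * φ t * d t = v z := by
          intro v
          rw [tsum_eq_single z (by intro b hb; simp [hφdef, hb])]
          simp only [hφdef, if_pos rfl]
          field_simp
          rw [mul_div_assoc, div_self (hdpos z).ne', mul_one]
        have h := hweak φ hφ
        rw [he u] at h
        exact h.congr fun n => he (un n)
      have hdiff : Tendsto (fun n => |un n y - un n x|) atTop (nhds |u y - u x|) :=
        ((hpt y).sub (hpt x)).abs
      set s := (1 + |u y - u x|) / 2 with hs
      have hs1 : 1 < s := by rw [hs]; linarith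
      have hs' : s < |u y - u x| := by rw [hs]; linarith
      have hev1 : ∀ᶠ n in atTop, s ≤ |un n y - un n x| :=
        (hdiff.eventually (eventually_gt_nhds hs')).mono fun n hn => hn.le
      rw [hIKtop]
      have htop : Tendsto (fun n => J (pn n) (un n)) atTop (nhds ⊤) := by
        rw [ENNReal.tendsto_nhds_top_iff_nnreal]
        intro C
        have hgrow := mosco_grow s (w x y) hs1 hwpos pn hpn3 hpnTop
        have hev2 : ∀ᶠ n in atTop,
            (C : ℝ≥0∞) < ENNReal.ofReal (1 / (2 * pn n) * (s ^ (pn n) * w x y)) := by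
          filter_upwards [hgrow.eventually_gt_atTop (C : ℝ)] with n hn
          rw [← ENNReal.ofReal_coe_nnreal]
          exact (ENNReal.ofReal_lt_ofReal_iff (lt_of_le_of_lt C.coe_nonneg hn)).mpr hn
        filter_upwards [hev1, hev2] with n hn1 hn2
        set p := pn n with hp
        have hp3 : 3 ≤ p := hpn3 n
        have hp0 : (0:ℝ) < p := by linarith
        by_cases hsum : (Summable fun t => (un n t) ^ 2 * d t) ∧
            (Summable fun t => |un n t| ^ p * d t)
        · rw [(hJ p (un n)).1 hsum]
          refine lt_of_lt_of_le hn2 (ENNReal.ofReal_le_ofReal ?_)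
          -- summability of the double sum
          have hpair := mosco_pair_sum w d hw hsymm hws hd (fun t => |un n t| ^ p)
            (fun t => Real.rpow_nonneg (abs_nonneg _) _) hsum.2
          have hterm : ∀ q : V × V, |un n q.2 - un n q.1| ^ p * w q.1 q.2 ≤
              2 ^ p * ((|un n q.1| ^ p + |un n q.2| ^ p) * w q.1 q.2) := by
            intro q
            calc |un n q.2 - un n q.1| ^ p * w q.1 q.2
                ≤ (2 ^ p * (|un n q.1| ^ p + |un n q.2| ^ p)) * w q.1 q.2 :=
                  mul_le_mul_of_nonneg_right
                    (mosco_rpow_bound p (un n q.1) (un n q.2) hp0.le) (hw _ _)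
              _ = 2 ^ p * ((|un n q.1| ^ p + |un n q.2| ^ p) * w q.1 q.2) := by ring
          have hFnonneg : ∀ q : V × V, 0 ≤ |un n q.2 - un n q.1| ^ p * w q.1 q.2 :=
            fun q => mul_nonneg (Real.rpow_nonneg (abs_nonneg _) _) (hw _ _)
          have hFs : Summable fun q : V × V => |un n q.2 - un n q.1| ^ p * w q.1 q.2 :=
            Summable.of_nonneg_of_le hFnonneg hterm (hpair.1.mul_left _)
          have hterm2 : s ^ p * w x y ≤ |un n y - un n x| ^ p * w x y :=
            mul_le_mul_of_nonneg_right
              (Real.rpow_le_rpow (by linarith : (0:ℝ) ≤ s) hn1 hp0.le) (hw x y)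
          have hle : |un n y - un n x| ^ p * w x y ≤
              ∑' q : V × V, |un n q.2 - un n q.1| ^ p * w q.1 q.2 :=
            Summable.le_tsum hFs (x, y) fun q _ => hFnonneg q
          have h2p : (0:ℝ) ≤ 1 / (2 * p) := by positivity
          exact mul_le_mul_of_nonneg_left (hterm2.trans hle) h2p
        · rw [(hJ p (un n)).2 hsum]
          exact ENNReal.coe_lt_top
      exact htop.liminf_eq.ge
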